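/- Let q be real with 0 < q < 1 and let α ≥ 1 be an integer. Then the sequence n ↦ ζ̃_{E,q}(n|α) = [2:q] · Σ_{m=1}^∞ (−1)^m q^m / [m:q^α]^n (indexed by positive integers n) converges, as n → ∞, to −q² · [2:q^{−1}] = −q(1+q). -/

import Mathlib

open scoped BigOperators

/-- `[x:q] = (q^x - 1)/(q - 1)` with real exponentiation. -/
noncomputable def qNum (q x : ℝ) : ℝ := (q ^ x - 1) / (q - 1)

/-- Weighted `q`-Euler zeta value at a positive integer `n`:
`ζ̃_{E,q}(n|α) = [2:q] ∑_{m≥1} (-1)^m q^m / [m:q^α]^n`. -/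
noncomputable def qEulerZeta (q : ℝ) (α n : ℕ) : ℝ :=
  qNum q 2 * ∑' m : ℕ, (-1 : ℝ) ^ (m + 1) * q ^ (m + 1) / (qNum (q ^ α) ((m : ℝ) + 1)) ^ n

lemma qNum_alt (r x : ℝ) : qNum r x = (1 - r ^ x) / (1 - r) := by
  unfold qNum
  rw [← neg_div_neg_eq]
  ring_nf

lemma qNum_ge_one {r : ℝ} (hr0 : 0 < r) (hr1 : r < 1) {x : ℝ} (hx : 1 ≤ x) :
    1 ≤ qNum r x := by
  rw [qNum_alt, le_div_iff₀ (by linarith)]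
  have h : r ^ x ≤ r ^ (1:ℝ) := Real.rpow_le_rpow_of_exponent_ge hr0 hr1.le hx
  rw [Real.rpow_one] at h
  linarith

lemma qNum_ge {r : ℝ} (hr0 : 0 < r) (hr1 : r < 1) {x : ℝ} (hx : 2 ≤ x) :
    1 + r ≤ qNum r x := by
  rw [qNum_alt, le_div_iff₀ (by linarith)]
  have h : r ^ x ≤ r ^ ((2:ℕ):ℝ) := Real.rpow_le_rpow_of_exponent_ge hr0 hr1.le (by exact_mod_cast hx)
  rw [Real.rpow_natCast] at h
  nlinarith

theorem statement6 (q : ℝ) (hq0 : 0 < q) (hq1 : q < 1) (α : ℕ) (hα : 1 ≤ α) :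
    Filter.Tendsto (fun n : ℕ => qEulerZeta q α (n + 1)) Filter.atTop
      (nhds (-q * (1 + q))) := by
  set r : ℝ := q ^ α with hr
  have hr0 : 0 < r := pow_pos hq0 α
  have hr1 : r < 1 := pow_lt_one₀ hq0.le hq1 (by omega)
  set f : ℕ → ℕ → ℝ := fun n m =>
    (-1 : ℝ) ^ (m + 1) * q ^ (m + 1) / (qNum r ((m : ℝ) + 1)) ^ n with hf
  have hcast : ∀ m : ℕ, (1:ℝ) ≤ (m : ℝ) + 1 := fun m => by
    have : (0:ℝ) ≤ (m:ℝ) := Nat.cast_nonneg m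
    linarith
  have hqnum_pos : ∀ m : ℕ, (0:ℝ) < qNum r ((m : ℝ) + 1) := fun m =>
    lt_of_lt_of_le one_pos (qNum_ge_one hr0 hr1 (hcast m))
  have habs : ∀ n m : ℕ, |f n m| ≤ q ^ (m + 1) := by
    intro n m
    rw [hf]
    simp only [abs_div, abs_mul, abs_pow, abs_neg, abs_one, one_pow, one_mul,
      abs_of_pos hq0, abs_of_pos (hqnum_pos m)]
    rw [div_le_iff₀ (pow_pos (hqnum_pos m) n)]
    have h1 : (1:ℝ) ≤ (qNum r ((m : ℝ) + 1)) ^ n :=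
      one_le_pow₀ (qNum_ge_one hr0 hr1 (hcast m))
    nlinarith [pow_pos hq0 (m+1)]
  have hsummable : ∀ n, Summable (f n) := by
    intro n
    refine Summable.of_norm_bounded (g := fun m => q ^ (m + 1)) ?_ (habs n)
    exact (summable_geometric_of_lt_one hq0.le hq1).comp_injective (add_left_injective 1)
  have hf0 : ∀ n, f n 0 = -q := by
    intro n
    have h1 : qNum r (1:ℝ) = 1 := by
      rw [qNum_alt, Real.rpow_one, div_self (by linarith : (1:ℝ) - r ≠ 0)]
    show (-1 : ℝ) ^ (0 + 1) * q ^ (0 + 1) / (qNum r (((0:ℕ) : ℝ) + 1)) ^ n = -q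
    norm_num [h1]
  -- tail bound
  have htail : ∀ n : ℕ, |∑' m : ℕ, f n (m + 1)| ≤ (q^2 / (1 - q)) * ((1 + r)⁻¹) ^ n := by
    intro n
    have hterm : ∀ m : ℕ, |f n (m + 1)| ≤ q ^ (m + 2) * ((1 + r)⁻¹) ^ n := by
      intro m
      have h2 : (1 + r) ≤ qNum r (((m+1 : ℕ) : ℝ) + 1) := by
        apply qNum_ge hr0 hr1
        push_cast; linarith
      have h3 : (1 + r) ^ n ≤ (qNum r (((m+1 : ℕ) : ℝ) + 1)) ^ n :=
        pow_le_pow_left₀ (by linarith) h2 n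
      calc |f n (m+1)| ≤ q ^ (m + 2) / (qNum r (((m+1:ℕ):ℝ) + 1)) ^ n := by
            rw [hf]
            simp only [abs_div, abs_mul, abs_pow, abs_neg, abs_one, one_pow, one_mul,
              abs_of_pos hq0, abs_of_pos (hqnum_pos (m+1))]
            norm_num
        _ ≤ q ^ (m + 2) / (1 + r) ^ n := by
            apply div_le_div_of_nonneg_left (by positivity) (by positivity) h3
        _ = q ^ (m + 2) * ((1 + r)⁻¹) ^ n := by
            rw [div_eq_mul_inv, inv_pow]
    have hs2 : Summable (fun m : ℕ => q ^ (m + 2) * ((1 + r)⁻¹) ^ n) := by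
      apply Summable.mul_right
      exact (summable_geometric_of_lt_one hq0.le hq1).comp_injective (add_left_injective 2)
    have hsabs : Summable (fun m : ℕ => |f n (m + 1)|) :=
      ((hsummable n).comp_injective (add_left_injective 1)).abs
    calc |∑' m : ℕ, f n (m + 1)| ≤ ∑' m : ℕ, |f n (m + 1)| := by
          rw [← Real.norm_eq_abs]
          have := norm_tsum_le_tsum_norm (f := fun m : ℕ => f n (m + 1)) (by simpa using hsabs)
          simpa using this
      _ ≤ ∑' m : ℕ, q ^ (m + 2) * ((1 + r)⁻¹) ^ n := Summable.tsum_le_tsum hterm hsabs hs2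
      _ = (∑' m : ℕ, q ^ (m + 2)) * ((1 + r)⁻¹) ^ n := tsum_mul_right
      _ = (q^2 / (1 - q)) * ((1 + r)⁻¹) ^ n := by
          congr 1
          calc (∑' m : ℕ, q ^ (m + 2)) = ∑' m : ℕ, q ^ 2 * q ^ m :=
                tsum_congr (fun m => by ring)
            _ = q ^ 2 * (1 - q)⁻¹ := by
                rw [tsum_mul_left, tsum_geometric_of_lt_one hq0.le hq1]
            _ = q ^ 2 / (1 - q) := by rw [div_eq_mul_inv]
  -- the tsum tends to -q
  have hsum_tendsto : Filter.Tendsto (fun n : ℕ => ∑' m : ℕ, f (n+1) m)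
      Filter.atTop (nhds (-q)) := by
    have hsplit : ∀ n, ∑' m : ℕ, f n m = -q + ∑' m : ℕ, f n (m + 1) := by
      intro n
      rw [Summable.tsum_eq_zero_add (hsummable n), hf0 n]
    have hbound : Filter.Tendsto (fun n : ℕ => (q^2 / (1 - q)) * ((1 + r)⁻¹) ^ (n+1))
        Filter.atTop (nhds 0) := by
      have h0 : Filter.Tendsto (fun n : ℕ => ((1 + r)⁻¹) ^ n) Filter.atTop (nhds 0) := by
        apply tendsto_pow_atTop_nhds_zero_of_lt_one (by positivity)
        rw [inv_lt_one_iff₀]; right; linarith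
      have := (h0.comp (Filter.tendsto_add_atTop_nat 1)).const_mul (q^2 / (1 - q))
      simpa using this
    have htend0 : Filter.Tendsto (fun n : ℕ => ∑' m : ℕ, f (n+1) (m + 1))
        Filter.atTop (nhds 0) := by
      apply squeeze_zero_norm (fun n => htail (n+1)) hbound
    have := htend0.const_add (-q)
    simpa [hsplit] using this
  -- final assembly
  have hq2 : qNum q 2 = 1 + q := by
    rw [qNum_alt]
    have : q ^ (2:ℝ) = q ^ (2:ℕ) := by
      rw [← Real.rpow_natCast q 2]; norm_num
    rw [this]
    have hne : (1 - q) ≠ 0 := by linarith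
    field_simp
    ring
  have heq : ∀ n : ℕ, qEulerZeta q α (n + 1) = (1 + q) * ∑' m : ℕ, f (n+1) m := by
    intro n
    rw [qEulerZeta, hq2, hf, hr]
  simp_rw [heq]
  have := hsum_tendsto.const_mul (1 + q)
  convert this using 2
  ring
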